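/- For a multi-armed bandit instance (H = 1, single state), the gap-visitation complexity satisfies C(M, ε) = ∑_a min{1/Δ̃(a)², 1/ε²} (up to the second OPT term with H=1 and single state being absorbed), and when the optimal arm is unique, C*(M) = ∑_{a : Δ(a)>0} 1/Δ(a)². Concretely: inf over probability distributions π on arms of max_a min{1/(π(a)Δ̃(a)²), 1/(π(a)ε²)} = ∑_a min{1/Δ̃(a)², 1/ε²}, and inf over distributions π of max_{a} 1/(π(a) Δ(a)²) (max over a with Δ(a)>0, π supported so that values are finite) = ∑_{a : Δ(a)>0} 1/Δ(a)². -/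

import Mathlib

open scoped ENNReal Classical

variable {A : Type*} [Fintype A] [Nonempty A]

/-- The suboptimality gap of arm `a`: `Δ(a) = max_{a'} μ(a') - μ(a)`. -/
noncomputable def gap (μ : A → ℝ) (a : A) : ℝ := (⨆ a', μ a') - μ a

/-- The effective gap `Δ̃(a)`: equal to `Δ(a)` for suboptimal arms; equal to the minimum
nonzero gap for a unique optimal arm; and `0` for non-unique optimal arms. -/
noncomputable def egap (μ : A → ℝ) (a : A) : ℝ :=
  if 0 < gap μ a then gap μ a
  else if ∀ a', gap μ a' = 0 → a' = a then ⨅ a' : {a' // 0 < gap μ a'}, gap μ a'.1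
  else 0

lemma key_lemma (c : A → ℝ≥0∞) :
    (⨅ (π : A → ℝ≥0∞) (_ : ∑ a, π a = 1), ⨆ a, c a / π a) = ∑ a, c a := by
  apply le_antisymm
  · by_cases hS : ∑ a, c a = ∞
    · exact hS ▸ le_top
    by_cases h0 : ∑ a, c a = 0
    · obtain ⟨a0⟩ := (inferInstance : Nonempty A)
      have hc : ∀ a, c a = 0 := fun a =>
        (Finset.sum_eq_zero_iff.mp h0) a (Finset.mem_univ a)
      refine iInf₂_le_of_le (fun a => if a = a0 then 1 else 0) (by simp) ?_
      simp [hc, h0]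
    · refine iInf₂_le_of_le (fun a => c a / ∑ b, c b) ?_ ?_
      · simp only [div_eq_mul_inv, ← Finset.sum_mul]
        exact ENNReal.mul_inv_cancel h0 hS
      · refine iSup_le fun a => ?_
        by_cases hca : c a = 0
        · simp [hca]
        · have hcat : c a ≠ ∞ := ne_top_of_le_ne_top hS
            (Finset.single_le_sum (fun _ _ => zero_le) (Finset.mem_univ a))
          rw [div_eq_mul_inv, ENNReal.inv_div (Or.inl hS) (Or.inl h0),
            ENNReal.mul_div_cancel hca hcat]
  · refine le_iInf fun π => le_iInf fun hπ => ?_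
    by_cases hz : ∃ a, π a = 0 ∧ c a ≠ 0
    · obtain ⟨a, hpa, hca⟩ := hz
      have : c a / π a = ∞ := by rw [hpa, ENNReal.div_zero hca]
      calc ∑ a, c a ≤ ∞ := le_top
        _ ≤ ⨆ a, c a / π a := this ▸ le_iSup (fun a => c a / π a) a
    · push_neg at hz
      have hπa : ∀ a, π a ≠ ∞ := fun a => ne_top_of_le_ne_top (by simp)
        (hπ ▸ Finset.single_le_sum (fun _ _ => zero_le) (Finset.mem_univ a))
      calc ∑ a, c a ≤ ∑ a, π a * (c a / π a) := by
            refine Finset.sum_le_sum fun a _ => ?_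
            by_cases hp : π a = 0
            · simp [hz a hp]
            · rw [ENNReal.mul_div_cancel hp (hπa a)]
        _ ≤ ∑ a, π a * (⨆ b, c b / π b) := Finset.sum_le_sum fun a _ =>
            mul_le_mul_right (le_iSup (fun b => c b / π b) a) _
        _ = (∑ a, π a) * (⨆ b, c b / π b) := (Finset.sum_mul _ _ _).symm
        _ = _ := by rw [hπ, one_mul]

lemma min_inv (a b : ℝ≥0∞) : min a⁻¹ b⁻¹ = (max a b)⁻¹ := by
  rcases le_total a b with h | h
  · rw [max_eq_right h, min_eq_right (ENNReal.inv_le_inv.mpr h)]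
  · rw [max_eq_left h, min_eq_left (ENNReal.inv_le_inv.mpr h)]

lemma max_mul' (p x y : ℝ≥0∞) : max (p * x) (p * y) = p * max x y := by
  rcases le_total x y with h | h
  · rw [max_eq_right h, max_eq_right (mul_le_mul_right h p)]
  · rw [max_eq_left h, max_eq_left (mul_le_mul_right h p)]

/-- Gap-visitation complexity of a multi-armed bandit (`H = 1`, a single state):
`inf_π max_a min{1/(π(a)Δ̃(a)²), 1/(π(a)ε²)} = ∑_a min{1/Δ̃(a)², 1/ε²}`, and when the
optimal arm is unique,
`inf_π max_{a : Δ(a) > 0} 1/(π(a)Δ(a)²) = ∑_{a : Δ(a) > 0} 1/Δ(a)²`.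
All divisions are in `ℝ≥0∞`, so `x/0 = ∞` for `x > 0` and `min{∞, c} = c`. -/
theorem bandit_gap_visitation_complexity (μ : A → ℝ) (ε : ℝ) (hε : 0 < ε) :
    (⨅ (π : A → ℝ≥0∞) (_ : ∑ a, π a = 1), ⨆ a,
        min (1 / (π a * ENNReal.ofReal (egap μ a) ^ 2))
            (1 / (π a * ENNReal.ofReal ε ^ 2)))
      = ∑ a, min (1 / ENNReal.ofReal (egap μ a) ^ 2) (1 / ENNReal.ofReal ε ^ 2) ∧
    ((∃! a, gap μ a = 0) →
      (⨅ (π : A → ℝ≥0∞) (_ : ∑ a, π a = 1), ⨆ a : {a // 0 < gap μ a},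
          1 / (π a.1 * ENNReal.ofReal (gap μ a.1) ^ 2))
        = ∑ a, if 0 < gap μ a then 1 / ENNReal.ofReal (gap μ a) ^ 2 else 0) := by
  constructor
  · -- Part 1
    set c : A → ℝ≥0∞ :=
      fun a => (max (ENNReal.ofReal (egap μ a) ^ 2) (ENNReal.ofReal ε ^ 2))⁻¹ with hc
    have hm0 : ∀ a, max (ENNReal.ofReal (egap μ a) ^ 2) (ENNReal.ofReal ε ^ 2) ≠ 0 := by
      intro a
      have h2 : ENNReal.ofReal ε ^ 2 ≠ 0 :=
        pow_ne_zero 2 (ENNReal.ofReal_pos.mpr hε).ne'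
      exact fun h => h2 (le_antisymm (h ▸ le_max_right _ _) zero_le)
    have hmt : ∀ a, max (ENNReal.ofReal (egap μ a) ^ 2) (ENNReal.ofReal ε ^ 2) ≠ ∞ := by
      intro a
      simp [max_eq_iff, ENNReal.pow_ne_top, ENNReal.ofReal_ne_top]
    have hterm : ∀ (π : A → ℝ≥0∞) (a : A),
        min (1 / (π a * ENNReal.ofReal (egap μ a) ^ 2))
            (1 / (π a * ENNReal.ofReal ε ^ 2)) = c a / π a := by
      intro π a
      rw [one_div, one_div, min_inv, max_mul',
        ENNReal.mul_inv (Or.inr (hmt a)) (Or.inr (hm0 a)), mul_comm, hc,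
        div_eq_mul_inv]
    have hrhs : ∀ a, min (1 / ENNReal.ofReal (egap μ a) ^ 2)
        (1 / ENNReal.ofReal ε ^ 2) = c a := by
      intro a
      rw [one_div, one_div, min_inv, hc]
    calc (⨅ (π : A → ℝ≥0∞) (_ : ∑ a, π a = 1), ⨆ a,
        min (1 / (π a * ENNReal.ofReal (egap μ a) ^ 2))
            (1 / (π a * ENNReal.ofReal ε ^ 2)))
        = ⨅ (π : A → ℝ≥0∞) (_ : ∑ a, π a = 1), ⨆ a, c a / π a := by
          refine iInf_congr fun π => iInf_congr fun _ => iSup_congr fun a => hterm π a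
      _ = ∑ a, c a := key_lemma c
      _ = _ := by exact Finset.sum_congr rfl fun a _ => (hrhs a).symm
  · -- Part 2
    intro _
    set c : A → ℝ≥0∞ :=
      fun a => if 0 < gap μ a then (ENNReal.ofReal (gap μ a) ^ 2)⁻¹ else 0 with hc
    have hsup : ∀ (π : A → ℝ≥0∞),
        (⨆ a : {a // 0 < gap μ a}, 1 / (π a.1 * ENNReal.ofReal (gap μ a.1) ^ 2))
          = ⨆ a, c a / π a := by
      intro π
      have hval : ∀ (a : A) (ha : 0 < gap μ a),
          1 / (π a * ENNReal.ofReal (gap μ a) ^ 2) = c a / π a := by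
        intro a ha
        have hg0 : (ENNReal.ofReal (gap μ a) ^ 2) ≠ 0 :=
          pow_ne_zero 2 (ENNReal.ofReal_pos.mpr ha).ne'
        have hgt : (ENNReal.ofReal (gap μ a) ^ 2) ≠ ∞ :=
          ENNReal.pow_ne_top ENNReal.ofReal_ne_top
        rw [one_div, ENNReal.mul_inv (Or.inr hgt) (Or.inr hg0), mul_comm, hc]
        simp only [ha, if_true, div_eq_mul_inv]
      apply le_antisymm
      · exact iSup_le fun ⟨a, ha⟩ => (hval a ha) ▸ le_iSup (fun b => c b / π b) a
      · refine iSup_le fun a => ?_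
        by_cases ha : 0 < gap μ a
        · exact le_iSup_of_le (⟨a, ha⟩ : {a // 0 < gap μ a}) (hval a ha).ge
        · have : c a = 0 := by simp [hc, ha]
          simp [this]
    calc (⨅ (π : A → ℝ≥0∞) (_ : ∑ a, π a = 1), ⨆ a : {a // 0 < gap μ a},
          1 / (π a.1 * ENNReal.ofReal (gap μ a.1) ^ 2))
        = ⨅ (π : A → ℝ≥0∞) (_ : ∑ a, π a = 1), ⨆ a, c a / π a :=
          iInf_congr fun π => iInf_congr fun _ => hsup π
      _ = ∑ a, c a := key_lemma c
      _ = _ := Finset.sum_congr rfl fun a _ => by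
          by_cases ha : 0 < gap μ a <;> simp [hc, ha, one_div]
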